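/- For a ≥ 2, an element l = a*x + y of ⟨a, a+1⟩ with 0 ≤ y ≤ x satisfies l ∈ Λ^{x+1} if and only if y ≥ a, and l ∈ Λ^{x-1} (for x ≥ 1) if and only if y ≤ x - a - 1. -/
import Mathlib


/-- The elements of `⟨a, a+1⟩` expressible with quotient part `x`. -/
def LamX (a x : ℕ) : Set ℕ := {n | ∃ y ≤ x, n = a * x + y}

theorem stmt8 (a x y : ℕ) (ha : 2 ≤ a) (hyx : y ≤ x) :
    (a * x + y ∈ LamX a (x + 1) ↔ a ≤ y) ∧
    (1 ≤ x → (a * x + y ∈ LamX a (x - 1) ↔ (y : ℤ) ≤ (x : ℤ) - a - 1)) := by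
  have h1 : a * (x + 1) = a * x + a := by ring
  constructor
  · constructor
    · rintro ⟨y', hy', h⟩
      rw [h1] at h; omega
    · intro hay
      exact ⟨y - a, by omega, by rw [h1]; omega⟩
  · intro hx
    obtain ⟨x', rfl⟩ : ∃ x', x = x' + 1 := ⟨x - 1, by omega⟩
    have h3 : a * (x' + 1) = a * x' + a := by ring
    simp only [Nat.add_sub_cancel, LamX, Set.mem_setOf_eq, h3]
    constructor
    · rintro ⟨y', hy', h⟩
      push_cast; omega
    · intro hle
      push_cast at hle
      exact ⟨y + a, by omega, by omega⟩
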